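/- arXiv:2102.04900 — 2 statements merged into one kernel-verified Lean document; each statement's English description precedes it below -/
import Mathlib

section
/- Let Ω = B(0,1) be the open unit disk in ℝ² and x₀ = 0, so that u₀(x) = (1 − |x|²)/4 and both eigenvalues of D²u₀(0) equal −1/2. Then for any choice of maximum points x_ε of u_ε on the annulus Ω_ε = B(0,1) \ B̄(0,ε), one has lim_{ε→0⁺} λ_max(D²u_ε(x_ε)) = 0. -/
open Real Set Metric Filter Topology

noncomputable section

abbrev E2 := EuclideanSpace ℝ (Fin 2)

/-- Second partial derivative `∂²u/∂xᵢ∂xⱼ` at `x`. -/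
noncomputable def pd2 (u : E2 → ℝ) (x : E2) (i j : Fin 2) : ℝ :=
  fderiv ℝ (fun y => fderiv ℝ u y (EuclideanSpace.single j 1)) x (EuclideanSpace.single i 1)

/-- The Hessian matrix `D²u(x)`. -/
noncomputable def Hess (u : E2 → ℝ) (x : E2) : Matrix (Fin 2) (Fin 2) ℝ :=
  Matrix.of fun i j => pd2 u x i j

/-- The Laplacian `Δu(x)`. -/
noncomputable def lap (u : E2 → ℝ) (x : E2) : ℝ := pd2 u x 0 0 + pd2 u x 1 1

/-- The largest eigenvalue of a symmetric 2×2 real matrix. -/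
noncomputable def lambdaMax (M : Matrix (Fin 2) (Fin 2) ℝ) : ℝ :=
  ((M 0 0 + M 1 1) + Real.sqrt ((M 0 0 - M 1 1) ^ 2 + (M 0 1 + M 1 0) ^ 2)) / 2

/-- `u` is the torsion function of `U`: continuous up to the boundary, `C²` inside,
`Δu = -1` in `U` and `u = 0` on `∂U`. -/
def IsTorsion (U : Set E2) (u : E2 → ℝ) : Prop :=
  ContinuousOn u (closure U) ∧ (∀ x ∈ U, ContDiffAt ℝ 2 u x) ∧
    (∀ x ∈ U, lap u x = -1) ∧ (∀ x ∈ frontier U, u x = 0)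


/-- coordinate sum of squares -/
noncomputable def qf (y : E2) : ℝ := (y 0)^2 + (y 1)^2

lemma qf_eq_norm_sq (y : E2) : qf y = ‖y‖^2 := by
  rw [qf, EuclideanSpace.norm_eq]
  rw [Real.sq_sqrt (by positivity)]
  simp [Fin.sum_univ_two, sq_abs]

lemma continuous_qf : Continuous qf := by
  unfold qf; fun_prop

lemma contDiff_qf : ContDiff ℝ 2 qf := by
  unfold qf
  have h0 : ContDiff ℝ 2 (fun y : E2 => y 0) := (EuclideanSpace.proj (0 : Fin 2) : E2 →L[ℝ] ℝ).contDiff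
  have h1 : ContDiff ℝ 2 (fun y : E2 => y 1) := (EuclideanSpace.proj (1 : Fin 2) : E2 →L[ℝ] ℝ).contDiff
  exact (h0.pow 2).add (h1.pow 2)

noncomputable def Dq (y : E2) : E2 →L[ℝ] ℝ :=
  (2 * y 0) • (EuclideanSpace.proj (0 : Fin 2) : E2 →L[ℝ] ℝ)
    + (2 * y 1) • (EuclideanSpace.proj (1 : Fin 2) : E2 →L[ℝ] ℝ)

lemma hasFDerivAt_qf (y : E2) : HasFDerivAt qf (Dq y) y := by
  have h0 : HasFDerivAt (fun z : E2 => z 0) (EuclideanSpace.proj (0:Fin 2) : E2 →L[ℝ] ℝ) y :=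
    (EuclideanSpace.proj (0:Fin 2) : E2 →L[ℝ] ℝ).hasFDerivAt
  have h1 : HasFDerivAt (fun z : E2 => z 1) (EuclideanSpace.proj (1:Fin 2) : E2 →L[ℝ] ℝ) y :=
    (EuclideanSpace.proj (1:Fin 2) : E2 →L[ℝ] ℝ).hasFDerivAt
  have := ((h0.mul h0).add (h1.mul h1))
  have e1 : qf = ((fun z : E2 => z 0) * fun z => z 0) + (fun z => z 1) * fun z => z 1 := by
    funext z; simp [qf, sq]
  rw [e1]
  refine this.congr_fderiv ?_
  rw [Dq]; ext v; simp; ring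

lemma Dq_single (y : E2) (j : Fin 2) : Dq y (EuclideanSpace.single j 1) = 2 * y j := by
  fin_cases j <;>
    simp [Dq, EuclideanSpace.single_apply]

lemma pd2_eq_of_hasFDerivAt {f : E2 → ℝ} {s : Set E2} (hs : IsOpen s) {x : E2} (hx : x ∈ s)
    {F : E2 → E2 →L[ℝ] ℝ} (hF : ∀ y ∈ s, HasFDerivAt f (F y) y)
    {j : Fin 2} {G : E2 →L[ℝ] ℝ}
    (hG : HasFDerivAt (fun y => F y (EuclideanSpace.single j 1)) G x)
    (i : Fin 2) :
    pd2 f x i j = G (EuclideanSpace.single i 1) := by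
  have h1 : (fun y => fderiv ℝ f y (EuclideanSpace.single j 1))
      =ᶠ[𝓝 x] (fun y => F y (EuclideanSpace.single j 1)) := by
    filter_upwards [hs.mem_nhds hx] with y hy
    rw [(hF y hy).fderiv]
  rw [pd2, Filter.EventuallyEq.fderiv_eq h1, hG.fderiv]

/-- radial profile -/
noncomputable def phi (c s : ℝ) : ℝ := (1 - s)/4 + c/2 * Real.log s
/-- its derivative -/
noncomputable def p1 (c s : ℝ) : ℝ := -(1/4) + c/2 * s⁻¹

noncomputable def w (c : ℝ) (y : E2) : ℝ := phi c (qf y)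

lemma hasDerivAt_phi {c s : ℝ} (hs : s ≠ 0) : HasDerivAt (phi c) (p1 c s) s := by
  have h1 : HasDerivAt (fun t : ℝ => (1 - t)/4) (-(1/4)) s := by
    have := ((hasDerivAt_id s).const_sub 1).div_const 4
    exact this.congr_deriv (by norm_num)
  have h2 : HasDerivAt (fun t : ℝ => c/2 * Real.log t) (c/2 * s⁻¹) s :=
    (Real.hasDerivAt_log hs).const_mul (c/2)
  exact h1.add h2

lemma hasDerivAt_p1 {c s : ℝ} (hs : s ≠ 0) :
    HasDerivAt (p1 c) (-(c/2) * (s^2)⁻¹) s := by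
  have h2 : HasDerivAt (fun t : ℝ => c/2 * t⁻¹) (c/2 * (-(s^2)⁻¹)) s :=
    (hasDerivAt_inv hs).const_mul (c/2)
  have := h2.const_add (-(1/4 : ℝ))
  have h3 : HasDerivAt (p1 c) (c/2 * (-(s^2)⁻¹)) s := this
  convert h3 using 1; ring

noncomputable def Fw (c : ℝ) (y : E2) : E2 →L[ℝ] ℝ := p1 c (qf y) • Dq y

lemma hasFDerivAt_w {c : ℝ} {y : E2} (hy : qf y ≠ 0) : HasFDerivAt (w c) (Fw c y) y :=
  (hasDerivAt_phi hy).comp_hasFDerivAt y (hasFDerivAt_qf y)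

lemma Fw_single (c : ℝ) (y : E2) (j : Fin 2) :
    Fw c y (EuclideanSpace.single j 1) = p1 c (qf y) * (2 * y j) := by
  simp [Fw, Dq_single]

lemma sOpen : IsOpen {y : E2 | qf y ≠ 0} :=
  isOpen_ne_fun continuous_qf continuous_const

lemma pd2_w {c : ℝ} {x : E2} (hx : qf x ≠ 0) (i j : Fin 2) :
    pd2 (w c) x i j
      = (-(c/2) * ((qf x)^2)⁻¹) * (2 * x j) * (2 * x i)
        + p1 c (qf x) * (2 * (if i = j then 1 else 0)) := by
  have hpq : HasFDerivAt (fun y => p1 c (qf y)) ((-(c/2) * ((qf x)^2)⁻¹) • Dq x) x :=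
    (hasDerivAt_p1 hx).comp_hasFDerivAt x (hasFDerivAt_qf x)
  have hco : HasFDerivAt (fun y : E2 => 2 * y j)
      ((2:ℝ) • (EuclideanSpace.proj j : E2 →L[ℝ] ℝ)) x :=
    (EuclideanSpace.proj j : E2 →L[ℝ] ℝ).hasFDerivAt.const_mul 2
  have hmul := hpq.mul hco
  have key := pd2_eq_of_hasFDerivAt sOpen hx (fun y hy => hasFDerivAt_w hy)
      (by
        refine HasFDerivAt.congr_of_eventuallyEq hmul ?_
        filter_upwards with y
        rw [Fw_single]; rfl) i
  rw [key]
  rcases eq_or_ne i j with h | h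
  · subst h; simp [Dq_single, EuclideanSpace.single_apply]; ring
  · simp [Dq_single, EuclideanSpace.single_apply, h, Ne.symm h]; ring

noncomputable def lap' (u : E2 → ℝ) (x : E2) : ℝ := pd2 u x 0 0 + pd2 u x 1 1

lemma lap_w {c : ℝ} {x : E2} (hx : qf x ≠ 0) : lap' (w c) x = -1 := by
  rw [lap', pd2_w hx, pd2_w hx]
  simp only [if_pos rfl, if_true]
  have h4 : (x 0)^2 + (x 1)^2 = qf x := rfl
  rw [p1]
  have step1 :
      -(c/2) * ((qf x)^2)⁻¹ * (2 * x 0) * (2 * x 0) + (-(1/4) + c/2 * (qf x)⁻¹) * (2 * 1)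
        + (-(c/2) * ((qf x)^2)⁻¹ * (2 * x 1) * (2 * x 1) + (-(1/4) + c/2 * (qf x)⁻¹) * (2 * 1))
      = -(c/2) * ((qf x)^2)⁻¹ * (4 * ((x 0)^2 + (x 1)^2)) + (-(1/4) + c/2 * (qf x)⁻¹) * 4 := by
    ring
  rw [step1, h4]
  field_simp
  ring

lemma contDiffAt_w {c : ℝ} {x : E2} (hx : qf x ≠ 0) : ContDiffAt ℝ 2 (w c) x := by
  have hphi : ContDiffAt ℝ 2 (phi c) (qf x) := by
    have h1 : ContDiffAt ℝ 2 (fun s : ℝ => (1 - s)/4) (qf x) := by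
      have : ContDiff ℝ 2 (fun s : ℝ => (1 - s)/4) :=
        (contDiff_const.sub contDiff_id).div_const 4
      exact this.contDiffAt
    have h2 : ContDiffAt ℝ 2 (fun s : ℝ => c/2 * Real.log s) (qf x) :=
      (Real.contDiffAt_log.mpr hx).const_smul (c/2)
    exact h1.add h2
  exact hphi.comp x contDiff_qf.contDiffAt

/-- 1-D second derivative test at a local max. -/
lemma second_deriv_test_1d {g : ℝ → ℝ} {r : ℝ} (hr : 0 < r)
    (hdiff : ∀ t ∈ Ioo (-r) r, DifferentiableAt ℝ g t)
    (hd2 : DifferentiableAt ℝ (deriv g) 0)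
    (hmax : IsLocalMax g 0) : deriv (deriv g) 0 ≤ 0 := by
  by_contra hpos
  push_neg at hpos
  have h0 : deriv g 0 = 0 := hmax.deriv_eq_zero
  have hslope : Tendsto (slope (deriv g) 0) (𝓝[≠] (0:ℝ)) (𝓝 (deriv (deriv g) 0)) :=
    hasDerivAt_iff_tendsto_slope.1 hd2.hasDerivAt
  have hev : ∀ᶠ t in 𝓝[≠] (0:ℝ), 0 < slope (deriv g) 0 t :=
    hslope.eventually_const_lt hpos
  have hmono : 𝓝[>] (0:ℝ) ≤ 𝓝[≠] (0:ℝ) :=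
    nhdsWithin_mono 0 (fun t (ht : t ∈ Ioi (0:ℝ)) => (ne_of_gt ht : t ≠ 0))
  have hev2 : ∀ᶠ t in 𝓝[>] (0:ℝ), 0 < deriv g t := by
    filter_upwards [hev.filter_mono hmono, self_mem_nhdsWithin] with t ht ht'
    have h1 : 0 < t⁻¹ * (deriv g t - deriv g 0) := by simpa [slope] using ht
    rw [h0, sub_zero] at h1
    have htpos : (0:ℝ) < t := ht'
    have h2 := mul_pos htpos h1
    rwa [mul_inv_cancel_left₀ htpos.ne'] at h2
  -- also the local max condition eventually
  have hev3 : ∀ᶠ t in 𝓝[>] (0:ℝ), g t ≤ g 0 :=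
    (hmax.filter_mono (nhdsWithin_le_nhds)).mono (fun t ht => ht)
  obtain ⟨δ, hδ, hIoo⟩ := (mem_nhdsGT_iff_exists_Ioo_subset).mp
    ((hev2.and hev3).mono (fun t ht => ht) : {t | 0 < deriv g t ∧ g t ≤ g 0} ∈ 𝓝[>] (0:ℝ))
  have hδ0 : (0:ℝ) < δ := hδ
  set δ' := min δ r with hδ'
  have hδ'0 : 0 < δ' := lt_min hδ0 hr
  have hsub : Ioo (0:ℝ) δ' ⊆ Ioo 0 δ := Ioo_subset_Ioo le_rfl (min_le_left _ _)
  have hmono2 : StrictMonoOn g (Ico (0:ℝ) δ') := by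
    apply strictMonoOn_of_deriv_pos (convex_Ico 0 δ')
    · apply ContinuousOn.mono (s := Ioo (-r) r)
      · exact fun t ht => (hdiff t ht).continuousAt.continuousWithinAt
      · intro t ht
        exact ⟨lt_of_lt_of_le (neg_lt_zero.mpr hr) ht.1, lt_of_lt_of_le ht.2 (min_le_right _ _)⟩
    · intro t ht
      rw [interior_Ico] at ht
      exact (hIoo (hsub ht)).1
  have hc : g (δ'/2) ≤ g 0 := (hIoo (hsub ⟨half_pos hδ'0, half_lt_self hδ'0⟩)).2
  have : g 0 < g (δ'/2) :=
    hmono2 ⟨le_rfl, hδ'0⟩ ⟨(half_pos hδ'0).le, half_lt_self hδ'0⟩ (half_pos hδ'0)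
  linarith

lemma pd2_diag_nonpos {f : E2 → ℝ} {z : E2} (hf : ContDiffAt ℝ 2 f z)
    (hmax : IsLocalMax f z) (i : Fin 2) : pd2 f z i i ≤ 0 := by
  set e : E2 := EuclideanSpace.single i 1 with he
  set L : ℝ → E2 := fun t => z + t • e with hL
  have hL0 : L 0 = z := by simp [hL]
  have hLd : ∀ t : ℝ, HasDerivAt L e t := by
    intro t
    have : HasDerivAt (fun s : ℝ => s • e) ((1:ℝ) • e) t := (hasDerivAt_id t).smul_const e
    simpa [hL] using this.const_add z
  obtain ⟨u, hu_mem, hu⟩ := hf.contDiffOn le_rfl (by simp)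
  have hzu : z ∈ interior u := mem_interior_iff_mem_nhds.mpr hu_mem
  have huo : IsOpen (interior u) := isOpen_interior
  have hCD : ∀ y ∈ interior u, ContDiffAt ℝ 2 f y := fun y hy =>
    (hu.mono interior_subset).contDiffAt (huo.mem_nhds hy)
  -- radius r with L '' (-r, r) ⊆ interior u
  have hcont : Continuous L := by fun_prop
  obtain ⟨r, hr0, hrsub⟩ : ∃ r > 0, ∀ t : ℝ, |t| < r → L t ∈ interior u := by
    have : L ⁻¹' (interior u) ∈ 𝓝 (0:ℝ) := by
      apply hcont.continuousAt.preimage_mem_nhds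
      rw [hL0]; exact huo.mem_nhds hzu
    obtain ⟨r, hr0, hball⟩ := Metric.mem_nhds_iff.mp this
    exact ⟨r, hr0, fun t ht => hball (by simpa [Real.dist_eq] using ht)⟩
  set g : ℝ → ℝ := fun t => f (L t) with hg
  set F1 : E2 → ℝ := fun y => fderiv ℝ f y e with hF1
  have hgd : ∀ t : ℝ, |t| < r → HasDerivAt g (F1 (L t)) t := by
    intro t ht
    have hdf : DifferentiableAt ℝ f (L t) := (hCD _ (hrsub t ht)).differentiableAt two_ne_zero
    have := hdf.hasFDerivAt.comp_hasDerivAt t (hLd t)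
    exact this
  have hderiv_g : ∀ t : ℝ, |t| < r → deriv g t = F1 (L t) := fun t ht => (hgd t ht).deriv
  -- F1 is differentiable at z
  have hF1d : DifferentiableAt ℝ F1 z := by
    have h1 : ContDiffAt ℝ 1 (fderiv ℝ f) z := hf.fderiv_right (by norm_num)
    exact (h1.differentiableAt one_ne_zero).clm_apply (differentiableAt_const e)
  have hd2g : DifferentiableAt ℝ (deriv g) 0 := by
    have hD : DifferentiableAt ℝ (fun t => F1 (L t)) 0 := by
      have hL0' : DifferentiableAt ℝ L 0 := (hLd 0).differentiableAt
      exact (hL0 ▸ hF1d : DifferentiableAt ℝ F1 (L 0)).comp 0 hL0'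
    apply hD.congr_of_eventuallyEq
    filter_upwards [Metric.ball_mem_nhds (0:ℝ) hr0] with t ht
    exact hderiv_g t (by simpa [Real.dist_eq] using ht)
  have hmaxg : IsLocalMax g 0 := by
    have : Tendsto L (𝓝 0) (𝓝 z) := by
      rw [← hL0]; exact hcont.continuousAt
    exact IsMaxFilter.comp_tendsto (by rwa [hL0]) this
  have htest := second_deriv_test_1d hr0
    (fun t ht => ((hgd t (by rw [abs_lt]; exact ⟨ht.1, ht.2⟩)).differentiableAt)) hd2g hmaxg
  -- identify deriv (deriv g) 0 with pd2 f z i i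
  have hkey : deriv (deriv g) 0 = pd2 f z i i := by
    have hev : deriv g =ᶠ[𝓝 (0:ℝ)] fun t => F1 (L t) := by
      filter_upwards [Metric.ball_mem_nhds (0:ℝ) hr0] with t ht
      exact hderiv_g t (by simpa [Real.dist_eq] using ht)
    rw [Filter.EventuallyEq.deriv_eq hev]
    have : HasDerivAt (fun t => F1 (L t)) (fderiv ℝ F1 z e) 0 := by
      have hF1d' : HasFDerivAt F1 (fderiv ℝ F1 z) (L 0) := hL0 ▸ hF1d.hasFDerivAt
      exact hF1d'.comp_hasDerivAt 0 (hLd 0)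
    rw [this.deriv]
    rfl
  rw [← hkey]
  exact htest

lemma pd2_qf (x : E2) (i j : Fin 2) : pd2 qf x i j = if i = j then 2 else 0 := by
  have key := pd2_eq_of_hasFDerivAt (s := univ) isOpen_univ (mem_univ x)
      (fun y _ => hasFDerivAt_qf y)
      (j := j) (G := (2:ℝ) • (EuclideanSpace.proj j : E2 →L[ℝ] ℝ))
      (by
        have : HasFDerivAt (fun y : E2 => 2 * y j)
            ((2:ℝ) • (EuclideanSpace.proj j : E2 →L[ℝ] ℝ)) x :=
          (EuclideanSpace.proj j : E2 →L[ℝ] ℝ).hasFDerivAt.const_mul 2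
        exact this.congr_of_eventuallyEq (by filter_upwards with y; rw [Dq_single])) i
  rw [key]
  rcases eq_or_ne i j with h | h
  · subst h; simp [EuclideanSpace.single_apply]
  · simp [EuclideanSpace.single_apply, h, Ne.symm h]

lemma pd2_add_qf {f : E2 → ℝ} {s : Set E2} (hs : IsOpen s) {x : E2} (hx : x ∈ s)
    (hf : ∀ y ∈ s, ContDiffAt ℝ 2 f y) (a : ℝ) (i j : Fin 2) :
    pd2 (fun y => f y + a * qf y) x i j = pd2 f x i j + a * pd2 qf x i j := by
  have hstep : ∀ y ∈ s, fderiv ℝ (fun y => f y + a * qf y) y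
      = fderiv ℝ f y + a • fderiv ℝ qf y := by
    intro y hy
    have h1 : DifferentiableAt ℝ f y := (hf y hy).differentiableAt two_ne_zero
    have h2 : DifferentiableAt ℝ qf y := (contDiff_qf.differentiable two_ne_zero).differentiableAt
    exact (h1.hasFDerivAt.add (h2.hasFDerivAt.const_mul a)).fderiv
  have hev : (fun y => fderiv ℝ (fun y => f y + a * qf y) y (EuclideanSpace.single j 1))
      =ᶠ[𝓝 x] fun y => fderiv ℝ f y (EuclideanSpace.single j 1)
        + a * fderiv ℝ qf y (EuclideanSpace.single j 1) := by
    filter_upwards [hs.mem_nhds hx] with y hy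
    rw [hstep y hy]; simp
  have d1 : DifferentiableAt ℝ (fun y => fderiv ℝ f y (EuclideanSpace.single j 1)) x :=
    (((hf x hx).fderiv_right (m := 1) (by norm_num)).differentiableAt one_ne_zero).clm_apply
      (differentiableAt_const _)
  have d2 : DifferentiableAt ℝ (fun y => fderiv ℝ qf y (EuclideanSpace.single j 1)) x :=
    ((contDiff_qf.contDiffAt.fderiv_right (m := 1) (by norm_num)).differentiableAt one_ne_zero).clm_apply
      (differentiableAt_const _)
  rw [pd2, Filter.EventuallyEq.fderiv_eq hev,
    (show HasFDerivAt (fun y => fderiv ℝ f y (EuclideanSpace.single j 1)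
      + a * fderiv ℝ qf y (EuclideanSpace.single j 1)) _ x from
      d1.hasFDerivAt.add (d2.hasFDerivAt.const_mul a)).fderiv]
  simp [pd2]

lemma max_principle {U : Set E2} (hUo : IsOpen U) (hUb : U ⊆ ball 0 1) {h : E2 → ℝ}
    (hc : ContinuousOn h (closure U)) (hC2 : ∀ x ∈ U, ContDiffAt ℝ 2 h x)
    (hlap : ∀ x ∈ U, lap' h x = 0) (hfr : ∀ x ∈ frontier U, h x = 0) :
    ∀ x ∈ closure U, h x ≤ 0 := by
  intro x₀ hx₀
  have hUne : (closure U).Nonempty := ⟨x₀, hx₀⟩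
  have hcl : closure U ⊆ closedBall 0 1 :=
    closure_minimal (hUb.trans ball_subset_closedBall) isClosed_closedBall
  have hcomp : IsCompact (closure U) :=
    (isCompact_closedBall (0:E2) 1).of_isClosed_subset isClosed_closure hcl
  have key : ∀ δ : ℝ, 0 < δ → h x₀ ≤ 0 + δ := by
    intro δ hδ
    set f : E2 → ℝ := fun y => h y + δ * qf y with hfdef
    have hfc : ContinuousOn f (closure U) :=
      hc.add (Continuous.continuousOn (continuous_const.mul continuous_qf))
    obtain ⟨z, hz, hzmax⟩ := hcomp.exists_isMaxOn hUne hfc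
    have hzfr : z ∈ frontier U := by
      by_contra hzfr
      have hzU : z ∈ U := by
        have hzi : z ∈ interior U := by
          by_contra h'
          exact hzfr ⟨hz, h'⟩
        rwa [hUo.interior_eq] at hzi
      have hlo : IsLocalMax f z :=
        hzmax.isLocalMax (Filter.mem_of_superset (hUo.mem_nhds hzU) subset_closure)
      have hC2f : ContDiffAt ℝ 2 f z :=
        (hC2 z hzU).add (contDiffAt_const.mul contDiff_qf.contDiffAt)
      have h00 : pd2 f z 0 0 ≤ 0 := pd2_diag_nonpos hC2f hlo 0
      have h11 : pd2 f z 1 1 ≤ 0 := pd2_diag_nonpos hC2f hlo 1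
      have hl : lap' f z = 4 * δ := by
        show lap' (fun y => h y + δ * qf y) z = 4 * δ
        rw [lap', pd2_add_qf hUo hzU hC2 δ 0 0, pd2_add_qf hUo hzU hC2 δ 1 1,
          pd2_qf, pd2_qf]
        have h0 := hlap z hzU
        rw [lap'] at h0
        simp only [if_pos rfl, if_true]
        linarith
      rw [lap'] at hl
      linarith
    -- max is attained on the frontier
    have hqz : qf z ≤ 1 := by
      rw [qf_eq_norm_sq]
      have : ‖z‖ ≤ 1 := by
        have := hcl hz
        rwa [mem_closedBall, dist_zero_right] at this
      nlinarith [norm_nonneg z]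
    have hfz : f z ≤ δ := by
      show h z + δ * qf z ≤ δ
      rw [hfr z hzfr]
      nlinarith
    have h1 : f x₀ ≤ f z := hzmax hx₀
    have h2 : h x₀ ≤ f x₀ := by
      show h x₀ ≤ h x₀ + δ * qf x₀
      nlinarith [qf_eq_norm_sq x₀, sq_nonneg ‖x₀‖, norm_nonneg x₀]
    linarith
  linarith [le_of_forall_pos_le_add key]

lemma pd2_sub {f g : E2 → ℝ} {s : Set E2} (hs : IsOpen s) {x : E2} (hx : x ∈ s)
    (hf : ∀ y ∈ s, ContDiffAt ℝ 2 f y) (hg : ∀ y ∈ s, ContDiffAt ℝ 2 g y) (i j : Fin 2) :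
    pd2 (fun y => f y - g y) x i j = pd2 f x i j - pd2 g x i j := by
  have hstep : ∀ y ∈ s, fderiv ℝ (fun y => f y - g y) y = fderiv ℝ f y - fderiv ℝ g y := by
    intro y hy
    exact (((hf y hy).differentiableAt two_ne_zero).hasFDerivAt.sub
      ((hg y hy).differentiableAt two_ne_zero).hasFDerivAt).fderiv
  have hev : (fun y => fderiv ℝ (fun y => f y - g y) y (EuclideanSpace.single j 1))
      =ᶠ[𝓝 x] fun y => fderiv ℝ f y (EuclideanSpace.single j 1)
        - fderiv ℝ g y (EuclideanSpace.single j 1) := by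
    filter_upwards [hs.mem_nhds hx] with y hy
    rw [hstep y hy]; simp
  have d1 : DifferentiableAt ℝ (fun y => fderiv ℝ f y (EuclideanSpace.single j 1)) x :=
    (((hf x hx).fderiv_right (m := 1) (by norm_num)).differentiableAt one_ne_zero).clm_apply
      (differentiableAt_const _)
  have d2 : DifferentiableAt ℝ (fun y => fderiv ℝ g y (EuclideanSpace.single j 1)) x :=
    (((hg x hx).fderiv_right (m := 1) (by norm_num)).differentiableAt one_ne_zero).clm_apply
      (differentiableAt_const _)
  rw [pd2, Filter.EventuallyEq.fderiv_eq hev, (show HasFDerivAt (fun y => fderiv ℝ f y (EuclideanSpace.single j 1)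
      - fderiv ℝ g y (EuclideanSpace.single j 1)) _ x from
      d1.hasFDerivAt.sub d2.hasFDerivAt).fderiv]
  simp [pd2]

lemma pd2_congr {f g : E2 → ℝ} {s : Set E2} (hs : IsOpen s) {x : E2} (hx : x ∈ s)
    (hfg : ∀ y ∈ s, f y = g y) (i j : Fin 2) : pd2 f x i j = pd2 g x i j := by
  have h1 : ∀ y ∈ s, fderiv ℝ f y = fderiv ℝ g y := by
    intro y hy
    apply Filter.EventuallyEq.fderiv_eq
    filter_upwards [hs.mem_nhds hy] with t ht
    exact hfg t ht
  rw [pd2, pd2]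
  apply congrFun (a := EuclideanSpace.single i 1)
  apply congrArg
  apply Filter.EventuallyEq.fderiv_eq
  filter_upwards [hs.mem_nhds hx] with y hy
  rw [h1 y hy]

/-- strict max of the profile at `s = 2c` -/
lemma phi_lt_phi {c : ℝ} (hc : 0 < c) {s : ℝ} (hs : 0 < s) (hne : s ≠ 2*c) :
    phi c s < phi c (2*c) := by
  have h2c : 0 < 2*c := by linarith
  rcases lt_or_gt_of_ne hne with h | h
  · have hm : StrictMonoOn (phi c) (Icc s (2*c)) := by
      apply strictMonoOn_of_deriv_pos (convex_Icc _ _)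
      · intro t ht
        exact ((hasDerivAt_phi (c := c) (by linarith [ht.1] : t ≠ 0)).differentiableAt).continuousAt.continuousWithinAt
      · intro t ht
        rw [interior_Icc] at ht
        have ht0 : 0 < t := lt_trans hs ht.1
        rw [(hasDerivAt_phi (c := c) ht0.ne').deriv, p1]
        have : c/2 * t⁻¹ > c/2 * (2*c)⁻¹ := by
          apply mul_lt_mul_of_pos_left _ (by linarith)
          exact inv_strictAnti₀ ht0 ht.2
        have h4 : c/2 * (2*c)⁻¹ = 1/4 := by field_simp; ring
        linarith
    exact hm (left_mem_Icc.mpr (by linarith)) (right_mem_Icc.mpr (by linarith)) h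
  · have hm : StrictAntiOn (phi c) (Icc (2*c) s) := by
      apply strictAntiOn_of_deriv_neg (convex_Icc _ _)
      · intro t ht
        exact ((hasDerivAt_phi (c := c) (by linarith [ht.1] : t ≠ 0)).differentiableAt).continuousAt.continuousWithinAt
      · intro t ht
        rw [interior_Icc] at ht
        have ht0 : 0 < t := lt_trans h2c ht.1
        rw [(hasDerivAt_phi (c := c) ht0.ne').deriv, p1]
        have : c/2 * t⁻¹ < c/2 * (2*c)⁻¹ := by
          apply mul_lt_mul_of_pos_left _ (by linarith)
          exact inv_strictAnti₀ h2c ht.1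
        have h4 : c/2 * (2*c)⁻¹ = 1/4 := by field_simp; ring
        linarith
    exact hm (left_mem_Icc.mpr (by linarith)) (right_mem_Icc.mpr (by linarith)) h

section Annulus
variable {ε : ℝ}

lemma annulus_isOpen : IsOpen (ball (0:E2) 1 \ closedBall (0:E2) ε) :=
  isOpen_ball.sdiff isClosed_closedBall

lemma annulus_mem_iff {y : E2} :
    y ∈ ball (0:E2) 1 \ closedBall (0:E2) ε ↔ ε < ‖y‖ ∧ ‖y‖ < 1 := by
  simp [mem_ball, mem_closedBall, dist_zero_right, not_le, and_comm]

lemma annulus_qf_pos (hε : 0 < ε) {y : E2} (hy : y ∈ ball (0:E2) 1 \ closedBall (0:E2) ε) :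
    0 < qf y := by
  rw [qf_eq_norm_sq]
  have h1 := (annulus_mem_iff.mp hy).1
  have h2 : 0 < ‖y‖ := lt_trans hε h1
  positivity

lemma annulus_frontier_subset (hε : 0 < ε) :
    frontier (ball (0:E2) 1 \ closedBall (0:E2) ε) ⊆ sphere (0:E2) 1 ∪ sphere (0:E2) ε := by
  have h1 : ball (0:E2) 1 \ closedBall (0:E2) ε = ball (0:E2) 1 ∩ (closedBall (0:E2) ε)ᶜ := rfl
  rw [h1]
  refine (frontier_inter_subset _ _).trans ?_
  intro y hy
  rcases hy with h | h
  · left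
    have := h.1
    rwa [frontier_ball (0:E2) one_ne_zero] at this
  · right
    have := h.2
    rwa [frontier_compl, frontier_closedBall (0:E2) hε.ne'] at this

lemma annulus_closure_qf_pos (hε : 0 < ε) {y : E2}
    (hy : y ∈ closure (ball (0:E2) 1 \ closedBall (0:E2) ε)) : ε^2 ≤ qf y := by
  have h1 : closure (ball (0:E2) 1 \ closedBall (0:E2) ε)
      ⊆ closure (ball (0:E2) 1) ∩ closure ((closedBall (0:E2) ε)ᶜ) :=
    closure_inter_subset_inter_closure _ _
  have h2 := (h1 hy).2
  rw [closure_compl, interior_closedBall (0:E2) hε.ne'] at h2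
  have h3 : ε ≤ ‖y‖ := by
    have := h2
    simp only [mem_compl_iff, mem_ball, dist_zero_right, not_lt] at this
    exact this
  rw [qf_eq_norm_sq]
  nlinarith [norm_nonneg y]

lemma lap_eq_lap' (u : E2 → ℝ) (x : E2) : lap u x = lap' u x := rfl

/-- uniqueness: the torsion function of the annulus equals the explicit radial one -/
lemma torsion_eq_w {c : ℝ} (hε : 0 < ε) (hε1 : ε < 1) {u : E2 → ℝ}
    (hu : IsTorsion (ball (0:E2) 1 \ closedBall (0:E2) ε) u)
    (hw1 : phi c 1 = 0) (hwε : phi c (ε^2) = 0) :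
    ∀ y ∈ ball (0:E2) 1 \ closedBall (0:E2) ε, u y = w c y := by
  set U := ball (0:E2) 1 \ closedBall (0:E2) ε with hU
  obtain ⟨huc, huC2, hulap, hufr⟩ := hu
  have hwqf : ∀ y ∈ closure U, qf y ≠ 0 := by
    intro y hy
    have h1 := annulus_closure_qf_pos hε hy
    have h2 : 0 < ε^2 := by positivity
    linarith [lt_of_lt_of_le h2 h1]
  have hwc : ContinuousOn (w c) (closure U) := by
    intro y hy
    exact ((contDiffAt_w (hwqf y hy)).continuousAt).continuousWithinAt
  have hwC2 : ∀ y ∈ U, ContDiffAt ℝ 2 (w c) y :=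
    fun y hy => contDiffAt_w (annulus_qf_pos hε hy).ne'
  have hwfr : ∀ y ∈ frontier U, w c y = 0 := by
    intro y hy
    rcases annulus_frontier_subset hε hy with h | h
    · have : ‖y‖ = 1 := by simpa [mem_sphere, dist_zero_right] using h
      rw [w, qf_eq_norm_sq, this]
      simpa using hw1
    · have : ‖y‖ = ε := by simpa [mem_sphere, dist_zero_right] using h
      rw [w, qf_eq_norm_sq, this]
      exact hwε
  have hwlap : ∀ y ∈ U, lap' (w c) y = -1 :=
    fun y hy => lap_w (annulus_qf_pos hε hy).ne'
  -- difference satisfies max principle assumptions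
  have hUo : IsOpen U := annulus_isOpen
  have hUb : U ⊆ ball 0 1 := fun y hy => hy.1
  have hle : ∀ y ∈ closure U, u y - w c y ≤ 0 := by
    apply max_principle (h := fun y => u y - w c y) hUo hUb (huc.sub hwc)
      (fun y hy => (huC2 y hy).sub (hwC2 y hy))
    · intro y hy
      have := pd2_sub hUo hy huC2 hwC2
      rw [lap', this 0 0, this 1 1]
      have h1 := hulap y hy
      have h2 := hwlap y hy
      rw [lap_eq_lap'] at h1
      rw [lap'] at h1 h2
      linarith
    · intro y hy
      rw [hufr y hy, hwfr y hy, sub_zero]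
  have hge : ∀ y ∈ closure U, w c y - u y ≤ 0 := by
    apply max_principle (h := fun y => w c y - u y) hUo hUb (hwc.sub huc)
      (fun y hy => (hwC2 y hy).sub (huC2 y hy))
    · intro y hy
      have := pd2_sub hUo hy hwC2 huC2
      rw [lap', this 0 0, this 1 1]
      have h1 := hulap y hy
      have h2 := hwlap y hy
      rw [lap_eq_lap'] at h1
      rw [lap'] at h1 h2
      linarith
    · intro y hy
      rw [hufr y hy, hwfr y hy, sub_zero]
  intro y hy
  have h1 := hle y (subset_closure hy)
  have h2 := hge y (subset_closure hy)
  linarith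

end Annulus

lemma lambdaMax_Hess_w {c : ℝ} (hc : 0 < c) {x : E2} (hx : qf x = 2*c) :
    lambdaMax (Hess (w c) x) = 0 := by
  have hq0 : qf x ≠ 0 := by rw [hx]; positivity
  have hp1 : p1 c (2*c) = 0 := by rw [p1]; field_simp; ring
  have hM : ∀ i j, Hess (w c) x i j = -(x i * x j)/(2*c) := by
    intro i j
    show pd2 (w c) x i j = _
    rw [pd2_w hq0, hx, hp1]
    field_simp
    ring
  have hsum : x 0^2 + x 1^2 = 2*c := hx
  rw [lambdaMax, hM, hM, hM, hM]
  have h1 : (-(x 0*x 0)/(2*c) - -(x 1*x 1)/(2*c))^2 + (-(x 0*x 1)/(2*c) + -(x 1*x 0)/(2*c))^2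
      = ((x 0^2 + x 1^2)^2)/((2*c)^2) := by ring
  rw [h1, hsum, div_self (by positivity), Real.sqrt_one]
  have h2 : -(x 0 * x 0)/(2*c) + -(x 1 * x 1)/(2*c) = -1 := by
    field_simp
    nlinarith [hsum]
  rw [h2]
  norm_num

/-- On the punctured unit disk `Ω_ε = B(0,1) \ B̄(0,ε)` (where the torsion function of
`B(0,1)` is `u₀(x) = (1-|x|²)/4`, with both eigenvalues of `D²u₀(0)` equal to `-1/2`),
the largest eigenvalue of the Hessian of `u_ε` at any maximum point tends to `0`. -/
theorem spectral_gap_limit_annulus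
    (uε : ℝ → E2 → ℝ) (xε : ℝ → E2)
    (huε : ∀ ε ∈ Ioo (0:ℝ) 1, IsTorsion (ball (0:E2) 1 \ closedBall (0:E2) ε) (uε ε))
    (hxε : ∀ ε ∈ Ioo (0:ℝ) 1, xε ε ∈ ball (0:E2) 1 \ closedBall (0:E2) ε ∧
      IsMaxOn (uε ε) (ball (0:E2) 1 \ closedBall (0:E2) ε) (xε ε)) :
    Tendsto (fun ε => lambdaMax (Hess (uε ε) (xε ε))) (𝓝[>] (0:ℝ)) (𝓝 0) := by
  have hev : ∀ᶠ ε in 𝓝[>] (0:ℝ), lambdaMax (Hess (uε ε) (xε ε)) = 0 := by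
    filter_upwards [Ioo_mem_nhdsGT_of_mem
      (⟨le_rfl, by norm_num⟩ : (0:ℝ) ∈ Ico 0 (1/4))] with ε hε
    obtain ⟨hε0, hε14⟩ := hε
    have hε1 : ε < 1 := by linarith
    have hεI : ε ∈ Ioo (0:ℝ) 1 := ⟨hε0, hε1⟩
    set c : ℝ := (ε^2 - 1)/(4 * Real.log ε) with hcdef
    have hlog : Real.log ε < 0 := Real.log_neg hε0 hε1
    have hlog1 : Real.log ε < -1 := by
      have h4 : (1:ℝ) < Real.log 4 := by
        rw [Real.lt_log_iff_exp_lt (by norm_num)]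
        calc Real.exp 1 < 2.7182818286 := Real.exp_one_lt_d9
          _ < 4 := by norm_num
      have h5 : Real.log ε < Real.log (1/4) := Real.log_lt_log hε0 hε14
      rw [one_div, Real.log_inv] at h5
      linarith
    have hc : 0 < c := div_pos_of_neg_of_neg (by nlinarith) (by linarith)
    have hlogne : Real.log ε ≠ 0 := ne_of_lt hlog
    have h2c1 : 2*c < 1 := by
      have e1 : 1 - 2*c = (2*Real.log ε - (ε^2-1))/(2*Real.log ε) := by
        rw [hcdef]; field_simp; ring
      have e2 : 0 < 1 - 2*c := by
        rw [e1]
        apply div_pos_of_neg_of_neg (by nlinarith) (by linarith)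
      linarith
    have hε2c : ε^2 < 2*c := by
      have hlog2 : ε * Real.log ε ≥ ε - 1 := by
        have h6 := Real.log_le_sub_one_of_pos (show (0:ℝ) < ε⁻¹ by positivity)
        rw [Real.log_inv] at h6
        have h7 : ε * (-Real.log ε) ≤ ε * (ε⁻¹ - 1) := by
          exact mul_le_mul_of_nonneg_left h6 hε0.le
        have h8 : ε * ε⁻¹ = 1 := mul_inv_cancel₀ hε0.ne'
        nlinarith
      have e1 : 2*c - ε^2 = ((ε^2 - 1) - 2*ε^2*Real.log ε)/(2*Real.log ε) := by
        rw [hcdef]; field_simp; ring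
      have hnum : (ε^2 - 1) - 2*ε^2*Real.log ε < 0 := by
        have h9 : 2*ε*(ε*Real.log ε) ≥ 2*ε*(ε-1) := by nlinarith
        nlinarith [sq_nonneg (ε-1)]
      have e2 : 0 < 2*c - ε^2 := by
        rw [e1]; exact div_pos_of_neg_of_neg hnum (by linarith)
      linarith
    have hw1 : phi c 1 = 0 := by simp [phi]
    have hwε : phi c (ε^2) = 0 := by
      have hl2 : Real.log (ε^2) = 2 * Real.log ε := by
        rw [Real.log_pow]; norm_num
      rw [phi, hl2, hcdef]
      field_simp
      ring
    have hUt := huε ε hεI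
    obtain ⟨hxmem, hxmax⟩ := hxε ε hεI
    have hEq := torsion_eq_w hε0 hε1 hUt hw1 hwε
    have hqx : qf (xε ε) = 2*c := by
      by_contra hne
      set y₀ : E2 := EuclideanSpace.single 0 (Real.sqrt (2*c)) with hy0
      have hqy₀ : qf y₀ = 2*c := by
        have h0 : y₀ 0 = Real.sqrt (2*c) := by
          rw [hy0]; simp [EuclideanSpace.single_apply]
        have h1 : y₀ 1 = 0 := by
          rw [hy0]; simp [EuclideanSpace.single_apply]
        rw [qf, h0, h1, Real.sq_sqrt (by positivity)]; ring
      have hny : ‖y₀‖^2 = 2*c := by rw [← qf_eq_norm_sq, hqy₀]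
      have hy₀mem : y₀ ∈ ball (0:E2) 1 \ closedBall (0:E2) ε := by
        rw [annulus_mem_iff]
        constructor
        · nlinarith [norm_nonneg y₀, hε0]
        · nlinarith [norm_nonneg y₀]
      have h1 : uε ε y₀ ≤ uε ε (xε ε) := hxmax hy₀mem
      rw [hEq _ hy₀mem, hEq _ hxmem] at h1
      have h2 : w c (xε ε) < w c y₀ := by
        rw [w, w, hqy₀]
        exact phi_lt_phi hc (annulus_qf_pos hε0 hxmem) hne
      linarith
    have hHeq : Hess (uε ε) (xε ε) = Hess (w c) (xε ε) := by
      ext i j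
      exact pd2_congr annulus_isOpen hxmem hEq i j
    rw [hHeq]
    exact lambdaMax_Hess_w hc hqx
  exact Tendsto.congr' (EventuallyEq.symm hev) tendsto_const_nhds
end
end

section
/- For every r > 0 there exist C > 0 and ε₀ > 0 such that for all ε ∈ (0, ε₀), all x ∈ Ω_ε with |x − x₀| ≥ r, and all z on the circle ∂B(x₀, ε), the normal derivative of the Green's function G_ε of Ω_ε satisfies |∂G_ε(x, z)/∂ν_z| ≤ C/ε, where ∂/∂ν_z denotes the directional derivative in the second variable in the direction ν_z = −(z − x₀)/|z − x₀|. -/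
open Real Set Metric Filter Topology

noncomputable section

/-! ### Auxiliary calculus lemmas -/

lemma GNDB_diff_fderiv_apply {u : E2 → ℝ} {x : E2} (hu : ContDiffAt ℝ 2 u x) (j : Fin 2) :
    DifferentiableAt ℝ (fun y => fderiv ℝ u y (EuclideanSpace.single j 1)) x := by
  have h1 : ContDiffAt ℝ 1 (fderiv ℝ u) x := hu.fderiv_right (by norm_num)
  have h2 : DifferentiableAt ℝ (fderiv ℝ u) x := h1.differentiableAt (by norm_num)
  have h3 := ((ContinuousLinearMap.apply ℝ ℝ
    (EuclideanSpace.single j 1 : E2)).differentiableAt).comp x h2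
  exact h3

lemma GNDB_pd2_lincomb {u v : E2 → ℝ} {x : E2} (hu : ContDiffAt ℝ 2 u x)
    (hv : ContDiffAt ℝ 2 v x) (a b : ℝ) (i j : Fin 2) :
    pd2 (fun y => a * u y + b * v y) x i j = a * pd2 u x i j + b * pd2 v x i j := by
  have hue : ∀ᶠ y in 𝓝 x, ContDiffAt ℝ 2 u y := hu.eventually (by norm_num)
  have hve : ∀ᶠ y in 𝓝 x, ContDiffAt ℝ 2 v y := hv.eventually (by norm_num)
  have hev : (fun y => fderiv ℝ (fun y' => a * u y' + b * v y') y (EuclideanSpace.single j 1))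
      =ᶠ[𝓝 x] (fun y => a * fderiv ℝ u y (EuclideanSpace.single j 1)
        + b * fderiv ℝ v y (EuclideanSpace.single j 1)) := by
    filter_upwards [hue, hve] with y hy1 hy2
    have d1 : DifferentiableAt ℝ u y := hy1.differentiableAt (by norm_num)
    have d2 : DifferentiableAt ℝ v y := hy2.differentiableAt (by norm_num)
    have : fderiv ℝ (fun y' => a * u y' + b * v y') y
        = a • fderiv ℝ u y + b • fderiv ℝ v y := by
      rw [fderiv_fun_add ((d1.const_mul a)) ((d2.const_mul b)), fderiv_const_mul d1,
        fderiv_const_mul d2]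
    simp [this]
  unfold pd2
  rw [hev.fderiv_eq]
  have D1 := GNDB_diff_fderiv_apply hu j
  have D2 := GNDB_diff_fderiv_apply hv j
  rw [fderiv_fun_add ((D1.const_mul a)) ((D2.const_mul b)), fderiv_const_mul D1, fderiv_const_mul D2]
  simp

lemma GNDB_lap_lincomb {u v : E2 → ℝ} {x : E2} (hu : ContDiffAt ℝ 2 u x)
    (hv : ContDiffAt ℝ 2 v x) (a b : ℝ) :
    lap (fun y => a * u y + b * v y) x = a * lap u x + b * lap v x := by
  unfold lap; rw [GNDB_pd2_lincomb hu hv, GNDB_pd2_lincomb hu hv]; ring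

lemma GNDB_lap_add_const (u : E2 → ℝ) (K : ℝ) (x : E2) :
    lap (fun y => u y + K) x = lap u x := by
  have h : ∀ j : Fin 2, (fun y => fderiv ℝ (fun y' => u y' + K) y (EuclideanSpace.single j 1))
      = fun y => fderiv ℝ u y (EuclideanSpace.single j 1) := by
    intro j; funext y; rw [fderiv_add_const]
  unfold lap pd2
  rw [h 0, h 1]

noncomputable def GNDB_pr (i : Fin 2) : E2 →L[ℝ] ℝ := EuclideanSpace.proj i

lemma GNDB_pr_single (i j : Fin 2) :
    GNDB_pr i (EuclideanSpace.single j (1:ℝ)) = if i = j then 1 else 0 := by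
  simp [GNDB_pr, EuclideanSpace.single_apply]

lemma GNDB_norm_sq_eq (v : E2) : ‖v‖^2 = v 0^2 + v 1^2 := by
  rw [EuclideanSpace.norm_eq]
  rw [Real.sq_sqrt (by positivity)]
  simp [Fin.sum_univ_two, sq_abs]

noncomputable def GNDB_Qf (a : E2) : E2 → ℝ := fun y => (y 0 - a 0)^2 + (y 1 - a 1)^2

lemma GNDB_Qf_eq (a y : E2) : GNDB_Qf a y = ‖y - a‖^2 := by
  rw [GNDB_norm_sq_eq]; simp [GNDB_Qf, PiLp.sub_apply]

lemma GNDB_Qf_pos {a y : E2} (h : y ≠ a) : 0 < GNDB_Qf a y := by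
  rw [GNDB_Qf_eq]
  have h2 : ‖y - a‖ ≠ 0 := by simpa [sub_eq_zero] using h
  positivity

lemma GNDB_Qf_nonneg (a y : E2) : 0 ≤ GNDB_Qf a y := by unfold GNDB_Qf; positivity

noncomputable def GNDB_DQ (a : E2) (y : E2) : E2 →L[ℝ] ℝ :=
  (2*(y 0 - a 0)) • GNDB_pr 0 + (2*(y 1 - a 1)) • GNDB_pr 1

lemma GNDB_coord_hasFDerivAt (a : E2) (i : Fin 2) (y : E2) :
    HasFDerivAt (fun y : E2 => y i - a i) (GNDB_pr i) y := by
  exact ((GNDB_pr i).hasFDerivAt (x := y)).sub_const (a i)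

lemma GNDB_hasFDerivAt_Qf (a y : E2) : HasFDerivAt (GNDB_Qf a) (GNDB_DQ a y) y := by
  have h0 := (GNDB_coord_hasFDerivAt a 0 y).fun_mul (GNDB_coord_hasFDerivAt a 0 y)
  have h1 := (GNDB_coord_hasFDerivAt a 1 y).fun_mul (GNDB_coord_hasFDerivAt a 1 y)
  have h := h0.fun_add h1
  have heq : (fun y : E2 => (y 0 - a 0) * (y 0 - a 0) + (y 1 - a 1) * (y 1 - a 1))
      = GNDB_Qf a := by
    funext y; simp [GNDB_Qf]; ring
  rw [heq] at h
  refine h.congr_fderiv ?_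
  unfold GNDB_DQ; ext v
  simp [ContinuousLinearMap.add_apply, ContinuousLinearMap.smul_apply, smul_eq_mul]
  ring

lemma GNDB_contDiff_Qf (a : E2) : ContDiff ℝ 2 (GNDB_Qf a) := by
  unfold GNDB_Qf
  have c0 : ContDiff ℝ 2 (fun y : E2 => y 0 - a 0) := ((GNDB_pr 0).contDiff).sub contDiff_const
  have c1 : ContDiff ℝ 2 (fun y : E2 => y 1 - a 1) := ((GNDB_pr 1).contDiff).sub contDiff_const
  exact (c0.pow 2).add (c1.pow 2)

lemma GNDB_log_norm_eq (a : E2) :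
    (fun y : E2 => Real.log ‖y - a‖) = fun y => (1/2 : ℝ) * Real.log (GNDB_Qf a y) := by
  funext y
  rw [GNDB_Qf_eq, Real.log_pow]
  push_cast; ring

lemma GNDB_contDiffAt_log_norm {a z : E2} (h : z ≠ a) :
    ContDiffAt ℝ 2 (fun y : E2 => Real.log ‖y - a‖) z := by
  rw [GNDB_log_norm_eq]
  have hne : GNDB_Qf a z ≠ 0 := (GNDB_Qf_pos h).ne'
  have hlog : ContDiffAt ℝ 2 (fun y : E2 => Real.log (GNDB_Qf a y)) z :=
    (Real.contDiffAt_log.mpr hne).comp z (GNDB_contDiff_Qf a).contDiffAt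
  exact contDiffAt_const.mul hlog

lemma GNDB_lap_log_norm {a z : E2} (h : z ≠ a) :
    lap (fun y : E2 => Real.log ‖y - a‖) z = 0 := by
  have hopen : IsOpen {y : E2 | y ≠ a} := isOpen_ne
  have hmem : {y : E2 | y ≠ a} ∈ 𝓝 z := hopen.mem_nhds h
  have hfd : ∀ (j : Fin 2), (fun y => fderiv ℝ (fun y' : E2 => Real.log ‖y' - a‖) y
      (EuclideanSpace.single j 1)) =ᶠ[𝓝 z]
      (fun y => (GNDB_Qf a y)⁻¹ * (y j - a j)) := by
    intro j
    filter_upwards [hmem] with y hy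
    have hne : GNDB_Qf a y ≠ 0 := (GNDB_Qf_pos hy).ne'
    have H : HasFDerivAt (fun y' : E2 => Real.log ‖y' - a‖)
        (((1:ℝ)/2) • ((GNDB_Qf a y)⁻¹ • GNDB_DQ a y)) y := by
      rw [GNDB_log_norm_eq]
      exact ((GNDB_hasFDerivAt_Qf a y).log hne).const_mul ((1:ℝ)/2)
    rw [H.fderiv]
    rw [ContinuousLinearMap.smul_apply, ContinuousLinearMap.smul_apply]
    unfold GNDB_DQ
    rw [ContinuousLinearMap.add_apply, ContinuousLinearMap.smul_apply,
      ContinuousLinearMap.smul_apply, GNDB_pr_single, GNDB_pr_single]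
    fin_cases j <;> simp <;> field_simp <;> ring
  have hne : GNDB_Qf a z ≠ 0 := (GNDB_Qf_pos h).ne'
  have hsd : ∀ (j : Fin 2), pd2 (fun y : E2 => Real.log ‖y - a‖) z j j
      = (GNDB_Qf a z)⁻¹ * 1 + (z j - a j) * (-((GNDB_Qf a z)^2)⁻¹ * (2*(z j - a j))) := by
    intro j
    unfold pd2
    rw [(hfd j).fderiv_eq]
    have hinv : HasFDerivAt (fun y => (GNDB_Qf a y)⁻¹)
        ((-((GNDB_Qf a z)^2)⁻¹) • GNDB_DQ a z) z := by
      have h1 : HasDerivAt (fun t : ℝ => t⁻¹) (-((GNDB_Qf a z)^2)⁻¹) (GNDB_Qf a z) :=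
        hasDerivAt_inv hne
      have := h1.comp_hasFDerivAt z (GNDB_hasFDerivAt_Qf a z)
      exact this
    have H := hinv.fun_mul (GNDB_coord_hasFDerivAt a j z)
    rw [H.fderiv]
    rw [ContinuousLinearMap.add_apply, ContinuousLinearMap.smul_apply,
      ContinuousLinearMap.smul_apply, ContinuousLinearMap.smul_apply, GNDB_pr_single]
    unfold GNDB_DQ
    rw [ContinuousLinearMap.add_apply, ContinuousLinearMap.smul_apply,
      ContinuousLinearMap.smul_apply, GNDB_pr_single, GNDB_pr_single]
    fin_cases j <;> simp <;> ring
  unfold lap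
  rw [hsd 0, hsd 1]
  have hq : GNDB_Qf a z = (z 0 - a 0)^2 + (z 1 - a 1)^2 := rfl
  field_simp
  ring_nf
  rw [hq]
  field_simp
  ring

lemma GNDB_lap_Qf (a x : E2) : lap (GNDB_Qf a) x = 4 := by
  have hfd : ∀ (j : Fin 2), (fun y => fderiv ℝ (GNDB_Qf a) y (EuclideanSpace.single j 1))
      = (fun y : E2 => 2 * (y j - a j)) := by
    intro j
    funext y
    rw [(GNDB_hasFDerivAt_Qf a y).fderiv]
    unfold GNDB_DQ
    rw [ContinuousLinearMap.add_apply, ContinuousLinearMap.smul_apply,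
      ContinuousLinearMap.smul_apply, GNDB_pr_single, GNDB_pr_single]
    fin_cases j <;> simp
  have hsd : ∀ (j : Fin 2), pd2 (GNDB_Qf a) x j j = 2 := by
    intro j
    unfold pd2
    rw [hfd j]
    have H : HasFDerivAt (fun y : E2 => 2 * (y j - a j)) ((2:ℝ) • GNDB_pr j) x :=
      (GNDB_coord_hasFDerivAt a j x).const_mul 2
    rw [H.fderiv, ContinuousLinearMap.smul_apply, GNDB_pr_single]
    simp
  unfold lap; rw [hsd 0, hsd 1]; norm_num

/-! ### Second derivative test and the maximum principle -/

lemma GNDB_pd2_nonpos_at_localMax {u : E2 → ℝ} {p : E2} (hu : ContDiffAt ℝ 2 u p)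
    (hmax : IsLocalMax u p) (i : Fin 2) : pd2 u p i i ≤ 0 := by
  by_contra hlt
  push_neg at hlt
  set e : E2 := EuclideanSpace.single i 1 with he
  set l : ℝ → E2 := fun t => p + t • e with hl
  have hl0 : l 0 = p := by simp [hl]
  have hlder : ∀ t : ℝ, HasDerivAt l e t := by
    intro t
    have := ((hasDerivAt_id t).smul_const e).const_add p
    simpa [hl] using this
  set g : ℝ → ℝ := fun t => fderiv ℝ u (l t) e with hg
  have hd2 : DifferentiableAt ℝ (fderiv ℝ u) p :=
    (hu.fderiv_right (m := 1) (by norm_num)).differentiableAt (by norm_num)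
  have hd3 : DifferentiableAt ℝ (fun y => fderiv ℝ u y e) p := by
    have h3 := ((ContinuousLinearMap.apply ℝ ℝ (e : E2)).differentiableAt).comp p hd2
    exact h3
  have hgd : HasDerivAt g (pd2 u p i i) 0 := by
    have h1 : HasFDerivAt (fun y => fderiv ℝ u y e)
        (fderiv ℝ (fun y => fderiv ℝ u y e) p) (l 0) := by
      rw [hl0]; exact hd3.hasFDerivAt
    have h2 := h1.comp_hasDerivAt 0 (hlder 0)
    have : fderiv ℝ (fun y => fderiv ℝ u y e) p e = pd2 u p i i := rfl
    rw [this] at h2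
    exact h2
  have hg0 : g 0 = 0 := by
    have := hmax.fderiv_eq_zero
    simp [hg, hl0, this]
  have hslope : Tendsto (slope g 0) (𝓝[>] 0) (𝓝 (pd2 u p i i)) :=
    (hasDerivAt_iff_tendsto_slope.mp hgd).mono_left
      (nhdsWithin_mono 0 (fun t ht => ne_of_gt ht))
  have hposS : {t : ℝ | 0 < slope g 0 t} ∈ 𝓝[>] (0:ℝ) :=
    hslope.eventually (eventually_gt_nhds hlt)
  obtain ⟨δ₁, hδ₁, hIoo⟩ := mem_nhdsGT_iff_exists_Ioo_subset.mp hposS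
  have hcont0 : ContinuousAt l 0 := (hlder 0).continuousAt
  have hTev : ∀ᶠ t in 𝓝 (0:ℝ), u (l t) ≤ u p ∧ DifferentiableAt ℝ u (l t) := by
    have h1 : ∀ᶠ y in 𝓝 p, u y ≤ u p ∧ DifferentiableAt ℝ u y := by
      filter_upwards [hmax, hu.eventually (by norm_num)] with y h2 h3
      exact ⟨h2, h3.differentiableAt (by norm_num)⟩
    have hcont0' : Tendsto l (𝓝 0) (𝓝 p) := by rw [← hl0]; exact hcont0
    have := hcont0'.eventually h1
    exact this
  rw [Metric.eventually_nhds_iff] at hTev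
  obtain ⟨δ₂, hδ₂, hT⟩ := hTev
  set τ : ℝ := min δ₁ δ₂ / 2 with hτ
  have hδ₁' : (0:ℝ) < δ₁ := hδ₁
  have hmin : 0 < min δ₁ δ₂ := lt_min hδ₁' hδ₂
  have hτpos : 0 < τ := by positivity
  have hτδ₁ : τ < δ₁ := by
    have : min δ₁ δ₂ ≤ δ₁ := min_le_left _ _
    simp only [hτ]; linarith
  have hτδ₂ : τ < δ₂ := by
    have : min δ₁ δ₂ ≤ δ₂ := min_le_right _ _
    simp only [hτ]; linarith
  have hTt : ∀ t : ℝ, |t| ≤ τ → u (l t) ≤ u p ∧ DifferentiableAt ℝ u (l t) := by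
    intro t ht
    apply hT
    rw [Real.dist_eq, sub_zero]
    linarith
  set φ : ℝ → ℝ := fun t => u (l t) with hφ
  have hder : ∀ t ∈ Icc (0:ℝ) τ, HasDerivAt φ (g t) t := by
    intro t ht
    have habs : |t| ≤ τ := by
      rw [abs_of_nonneg ht.1]; exact ht.2
    have hdiff := (hTt t habs).2
    exact hdiff.hasFDerivAt.comp_hasDerivAt t (hlder t)
  have hcont : ContinuousOn φ (Icc 0 τ) := fun t ht => (hder t ht).continuousAt.continuousWithinAt
  have hderivpos : ∀ t ∈ interior (Icc (0:ℝ) τ), 0 < deriv φ t := by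
    intro t ht
    rw [interior_Icc] at ht
    have hslope_pos : 0 < slope g 0 t := hIoo ⟨ht.1, lt_trans ht.2 hτδ₁⟩
    have hgt : 0 < g t := by
      rw [slope_def_field] at hslope_pos
      have h0 : (g t - g 0) / (t - 0) > 0 := hslope_pos
      rw [hg0, sub_zero, sub_zero] at h0
      have := (div_pos_iff).mp h0
      rcases this with ⟨h, _⟩ | ⟨_, h2⟩
      · exact h
      · linarith [ht.1]
    rw [(hder t ⟨ht.1.le, ht.2.le⟩).deriv]
    exact hgt
  have hSM := strictMonoOn_of_deriv_pos (convex_Icc (0:ℝ) τ) hcont hderivpos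
  have h1 : φ 0 < φ τ := hSM ⟨le_rfl, hτpos.le⟩ ⟨hτpos.le, le_rfl⟩ hτpos
  have h2 : φ τ ≤ u p := (hTt τ (by rw [abs_of_nonneg hτpos.le])).1
  have h3 : φ 0 = u p := by simp [hφ, hl0]
  linarith

lemma GNDB_maxPrinciple {U : Set E2} (hUo : IsOpen U) (hUb : Bornology.IsBounded U) {u : E2 → ℝ}
    (hc : ContinuousOn u (closure U)) (hd : ∀ x ∈ U, ContDiffAt ℝ 2 u x)
    (hl : ∀ x ∈ U, lap u x = 0) (hb : ∀ x ∈ frontier U, u x ≤ 0) :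
    ∀ x ∈ closure U, u x ≤ 0 := by
  intro z hz
  have hK : IsCompact (closure U) := hUb.isCompact_closure
  obtain ⟨B, hB⟩ := hK.exists_bound_of_continuousOn ((GNDB_contDiff_Qf 0).continuous.continuousOn)
  set Qm : ℝ := max B 0 with hQm
  have hQmnn : 0 ≤ Qm := le_max_right _ _
  have hQb : ∀ y ∈ closure U, GNDB_Qf 0 y ≤ Qm := by
    intro y hy
    calc GNDB_Qf 0 y ≤ |GNDB_Qf 0 y| := le_abs_self _
    _ = ‖GNDB_Qf 0 y‖ := rfl
    _ ≤ B := hB y hy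
    _ ≤ Qm := le_max_left _ _
  have key : ∀ δ : ℝ, 0 < δ → u z ≤ δ * Qm := by
    intro δ hδ
    set v : E2 → ℝ := fun y => u y + δ * GNDB_Qf 0 y with hv
    have hvc : ContinuousOn v (closure U) :=
      hc.add ((continuous_const.mul (GNDB_contDiff_Qf 0).continuous).continuousOn)
    obtain ⟨p, hpK, hpmax⟩ := hK.exists_isMaxOn ⟨z, hz⟩ hvc
    by_cases hpU : p ∈ U
    · exfalso
      have hloc : IsLocalMax v p :=
        hpmax.isLocalMax (mem_of_superset (hUo.mem_nhds hpU) subset_closure)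
      have hveq : v = fun y => 1 * u y + δ * GNDB_Qf 0 y := by funext y; simp [hv]
      have hv2 : ContDiffAt ℝ 2 v p := by
        rw [hveq]
        exact (contDiffAt_const.mul (hd p hpU)).add
          (contDiffAt_const.mul (GNDB_contDiff_Qf 0).contDiffAt)
      have hlap : lap v p = 4 * δ := by
        rw [hveq]
        unfold lap
        rw [GNDB_pd2_lincomb (hd p hpU) (GNDB_contDiff_Qf 0).contDiffAt,
          GNDB_pd2_lincomb (hd p hpU) (GNDB_contDiff_Qf 0).contDiffAt]
        have h4 := GNDB_lap_Qf 0 p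
        have h0 := hl p hpU
        unfold lap at h4 h0
        linear_combination h0 + δ * h4
      have ht0 := GNDB_pd2_nonpos_at_localMax hv2 hloc 0
      have ht1 := GNDB_pd2_nonpos_at_localMax hv2 hloc 1
      unfold lap at hlap
      linarith
    · have hpf : p ∈ frontier U := by
        rw [frontier, hUo.interior_eq]
        exact ⟨hpK, hpU⟩
      have hup : u p ≤ 0 := hb p hpf
      have h1 : u z + δ * GNDB_Qf 0 z ≤ v p := hpmax hz
      have h2 : v p ≤ δ * Qm := by
        have h4 := hQb p hpK
        have h5 : v p = u p + δ * GNDB_Qf 0 p := rfl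
        nlinarith
      have h3 : 0 ≤ GNDB_Qf 0 z := GNDB_Qf_nonneg 0 z
      nlinarith
  by_contra hpos
  push_neg at hpos
  have hδ : 0 < u z / (2 * (Qm + 1)) := by positivity
  have := key _ hδ
  rw [div_mul_eq_mul_div, le_div_iff₀ (by positivity : (0:ℝ) < 2 * (Qm + 1))] at this
  nlinarith

/-! ### Geometric lemmas -/

lemma GNDB_continuousOn_log_norm (a : E2) (S : Set E2) (h : ∀ w ∈ S, w ≠ a) :
    ContinuousOn (fun w : E2 => Real.log ‖w - a‖) S := by
  apply ContinuousOn.log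
  · exact ((continuous_id.sub continuous_const).norm).continuousOn
  · intro w hw
    simpa [sub_eq_zero] using h w hw

lemma GNDB_sphere_subset_frontier {Ω : Set E2} (hΩo : IsOpen Ω) {x₀ : E2} {ε ε₁ : ℝ}
    (hε : 0 < ε) (hεε₁ : ε < ε₁) (hball : closedBall x₀ ε₁ ⊆ Ω) :
    sphere x₀ ε ⊆ frontier (Ω \ closedBall x₀ ε) := by
  intro z hz
  have hzd : dist z x₀ = ε := hz
  have hno : ‖z - x₀‖ = ε := by rw [← dist_eq_norm]; exact hzd
  constructor
  · -- z ∈ closure (Ω \ closedBall x₀ ε)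
    set w : ℝ → E2 := fun t => x₀ + (1 + t) • (z - x₀) with hw
    have hw0 : w 0 = z := by simp [hw]
    have hcontw : Continuous w := by
      apply continuous_const.add
      exact (continuous_const.add continuous_id).smul continuous_const
    have htend : Tendsto w (𝓝[>] (0:ℝ)) (𝓝 z) := by
      have h1 := hcontw.tendsto 0
      rw [hw0] at h1
      exact h1.mono_left nhdsWithin_le_nhds
    apply mem_closure_of_tendsto htend
    have hub : (0:ℝ) < ε₁/ε - 1 := by
      have : 1 < ε₁/ε := (one_lt_div hε).mpr hεε₁
      linarith
    filter_upwards [Ioo_mem_nhdsGT_of_mem (⟨le_rfl, hub⟩ : (0:ℝ) ∈ Ico 0 (ε₁/ε - 1))] with t ht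
    have hwnorm : ‖w t - x₀‖ = (1 + t) * ε := by
      have : w t - x₀ = (1 + t) • (z - x₀) := by simp [hw]
      rw [this, norm_smul, hno, Real.norm_eq_abs, abs_of_pos (by linarith [ht.1])]
    constructor
    · apply hball
      rw [mem_closedBall, dist_eq_norm, hwnorm]
      have h2 : 1 + t ≤ ε₁/ε := by linarith [ht.2]
      calc (1 + t) * ε ≤ (ε₁/ε) * ε := by nlinarith
      _ = ε₁ := by field_simp
    · intro hmem
      rw [mem_closedBall, dist_eq_norm, hwnorm] at hmem
      nlinarith [ht.1]
  · rw [(hΩo.sdiff isClosed_closedBall).interior_eq]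
    intro hmem
    exact hmem.2 (mem_closedBall.mpr (le_of_eq hzd))

/-! ### Main theorem -/

set_option maxHeartbeats 2000000

/-- Bound on the normal derivative of the Green's function `G_ε` of `Ω_ε` on the circle
`∂B(x₀,ε)`: for `x` at distance at least `r` from `x₀`, `|∂G_ε(x,z)/∂ν_z| ≤ C/ε`,
where `ν_z = -(z-x₀)/|z-x₀|`. -/
theorem green_normal_derivative_bound
    (Ω : Set E2) (hΩo : IsOpen Ω) (hΩb : Bornology.IsBounded Ω) (hΩc : Convex ℝ Ω)
    (x₀ : E2) (hx₀ : x₀ ∈ Ω)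
    (ε₁ : ℝ) (hε₁ : 0 < ε₁) (hball : closedBall x₀ ε₁ ⊆ Ω)
    (Gε : ℝ → E2 → E2 → ℝ)
    (hGreg : ∀ ε ∈ Ioo (0:ℝ) ε₁, ∀ y ∈ Ω \ closedBall x₀ ε,
      (∀ x ∈ Ω \ closedBall x₀ ε,
        ContDiffAt ℝ 2 (fun x' => Gε ε x' y + (1 / (2 * π)) * Real.log ‖x' - y‖) x ∧
        lap (fun x' => Gε ε x' y + (1 / (2 * π)) * Real.log ‖x' - y‖) x = 0) ∧
      ContinuousOn (fun x' => Gε ε x' y + (1 / (2 * π)) * Real.log ‖x' - y‖)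
        (closure (Ω \ closedBall x₀ ε)))
    (hGbdry : ∀ ε ∈ Ioo (0:ℝ) ε₁, ∀ y ∈ Ω \ closedBall x₀ ε,
      ∀ x ∈ frontier (Ω \ closedBall x₀ ε), Gε ε x y = 0)
    (hGsymm : ∀ ε ∈ Ioo (0:ℝ) ε₁, ∀ x y : E2, Gε ε x y = Gε ε y x)
    (hGdiff : ∀ ε ∈ Ioo (0:ℝ) ε₁, ∀ x ∈ Ω \ closedBall x₀ ε,
      ∀ z ∈ sphere x₀ ε, DifferentiableAt ℝ (fun z' => Gε ε x z') z) :
    ∀ r > 0, ∃ C > 0, ∃ ε₀ > 0, ε₀ ≤ ε₁ ∧ ∀ ε ∈ Ioo (0:ℝ) ε₀,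
      ∀ x ∈ Ω \ closedBall x₀ ε, r ≤ ‖x - x₀‖ → ∀ z ∈ sphere x₀ ε,
        |fderiv ℝ (fun z' => Gε ε x z') z (-(‖z - x₀‖⁻¹ • (z - x₀)))| ≤ C / ε := by
  intro r hr
  have hπ : 0 < π := Real.pi_pos
  set c : ℝ := 1 / (2 * π) with hcdef
  have hc : 0 < c := by positivity
  -- radius bound for Ω
  obtain ⟨R, hR⟩ := (isBounded_iff_subset_closedBall x₀).mp hΩb
  have hRcl : closure Ω ⊆ closedBall x₀ R := closure_minimal hR isClosed_closedBall
  have hR0 : 0 ≤ R := by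
    have h1 := mem_closedBall.mp (hRcl (subset_closure hx₀))
    simpa using h1
  set D : ℝ := max 1 (max r (2*R + 1)) with hDdef
  have hD1 : (1:ℝ) ≤ D := le_max_left _ _
  have hDr : r ≤ D := le_trans (le_max_left _ _) (le_max_right _ _)
  have hDR : 2*R + 1 ≤ D := le_trans (le_max_right _ _) (le_max_right _ _)
  have hrhalfD : r/2 < D := by
    rcases lt_or_ge (r/2) 1 with h | h
    · linarith
    · linarith
  set M : ℝ := c * (Real.log D - Real.log (r/2)) with hMdef
  have hM : 0 < M := by
    apply mul_pos hc
    have := Real.log_lt_log (by positivity : 0 < r/2) hrhalfD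
    linarith
  set ρ : ℝ := min ε₁ (r/2) with hρdef
  have hρ : 0 < ρ := lt_min hε₁ (by positivity)
  have hρε₁ : ρ ≤ ε₁ := min_le_left _ _
  have hρr : ρ ≤ r/2 := min_le_right _ _
  set ε₀ : ℝ := ρ * Real.exp (-1) with hε₀def
  have hexp1 : Real.exp (-1) < 1 := by
    rw [← Real.exp_zero]
    exact Real.exp_lt_exp.mpr (by norm_num)
  have hε₀pos : 0 < ε₀ := mul_pos hρ (Real.exp_pos _)
  have hε₀ρ : ε₀ < ρ := by
    calc ε₀ = ρ * Real.exp (-1) := rfl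
    _ < ρ * 1 := by nlinarith [Real.exp_pos (-1:ℝ)]
    _ = ρ := mul_one ρ
  have hε₀ε₁ : ε₀ ≤ ε₁ := le_trans hε₀ρ.le hρε₁
  refine ⟨M, hM, ε₀, hε₀pos, hε₀ε₁, ?_⟩
  intro ε hε x hx hrx z hz
  have hεpos : 0 < ε := hε.1
  have hεlt : ε < ε₀ := hε.2
  have hερ : ε < ρ := lt_trans hεlt hε₀ρ
  have hεε₁ : ε < ε₁ := lt_of_lt_of_le hεlt hε₀ε₁
  have hεIoo : ε ∈ Ioo (0:ℝ) ε₁ := ⟨hεpos, hεε₁⟩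
  -- the domain
  set U1 : Set E2 := Ω \ closedBall x₀ ε with hU1def
  have hU1o : IsOpen U1 := hΩo.sdiff isClosed_closedBall
  have hU1b : Bornology.IsBounded U1 := hΩb.subset diff_subset
  have hxU1 : x ∈ U1 := hx
  obtain ⟨hreg, hfc⟩ := hGreg ε hεIoo x hx
  set f : E2 → ℝ := fun w => Gε ε w x + c * Real.log ‖w - x‖ with hfdef
  have hGb : ∀ w ∈ frontier U1, Gε ε w x = 0 := hGbdry ε hεIoo x hx
  have hsf : sphere x₀ ε ⊆ frontier U1 :=
    GNDB_sphere_subset_frontier hΩo hεpos hεε₁ hball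
  have hzd : dist z x₀ = ε := hz
  have hzn : ‖z - x₀‖ = ε := by rw [← dist_eq_norm]; exact hzd
  -- distances
  have hfar : ∀ w : E2, dist w x₀ ≤ ρ → r/2 ≤ ‖w - x‖ := by
    intro w hw
    have h1 : ‖x - x₀‖ ≤ ‖x - w‖ + ‖w - x₀‖ := norm_sub_le_norm_sub_add_norm_sub x w x₀
    have h2 : ‖w - x₀‖ = dist w x₀ := (dist_eq_norm w x₀).symm
    have h3 : ‖x - w‖ = ‖w - x‖ := norm_sub_rev x w
    have := hrx
    rw [h3] at h1
    rw [h2] at h1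
    linarith [hρr]
  have hfarne : ∀ w : E2, dist w x₀ ≤ ρ → w ≠ x := by
    intro w hw heq
    have := hfar w hw
    rw [heq] at this
    simp at this
    linarith
  -- diameter bound
  have hdiam : ∀ w ∈ closure U1, ‖w - x‖ ≤ D := by
    intro w hw
    have hwΩ : w ∈ closure Ω := closure_mono diff_subset hw
    have h1 : dist w x₀ ≤ R := mem_closedBall.mp (hRcl hwΩ)
    have h2 : dist x x₀ ≤ R := mem_closedBall.mp (hRcl (subset_closure hx.1))
    have h3 : dist w x ≤ dist w x₀ + dist x₀ x := dist_triangle w x₀ x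
    rw [dist_comm x₀ x] at h3
    rw [dist_eq_norm] at h3
    linarith
  ------------------------------------------------------------------
  -- STEP A : Gε ε w x + c log ‖w-x‖ ≤ c log D on closure U1
  ------------------------------------------------------------------
  have hlogD : (0:ℝ) ≤ Real.log D := Real.log_nonneg hD1
  have stepA : ∀ w ∈ closure U1, Gε ε w x + c * Real.log ‖w - x‖ ≤ c * Real.log D := by
    have hmp := GNDB_maxPrinciple hU1o hU1b
      (u := fun w => f w + (-(c * Real.log D)))
      (hfc.add continuousOn_const)
      (fun w hw => ((hreg w hw).1).add contDiffAt_const)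
      (fun w hw => by
        rw [GNDB_lap_add_const]
        exact (hreg w hw).2)
      (fun w hw => by
        have h0 : Gε ε w x = 0 := hGb w hw
        have hwcl : w ∈ closure U1 := frontier_subset_closure hw
        have hlogle : Real.log ‖w - x‖ ≤ Real.log D := by
          rcases eq_or_ne w x with heq | hne
          · rw [heq]; simp; exact hlogD
          · have hpos : 0 < ‖w - x‖ := norm_pos_iff.mpr (sub_ne_zero_of_ne hne)
            exact (Real.log_le_log_iff hpos (by linarith)).mpr (hdiam w hwcl)
        show f w + (-(c * Real.log D)) ≤ 0
        have hfw : f w = Gε ε w x + c * Real.log ‖w - x‖ := rfl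
        rw [hfw, h0]
        nlinarith [hlogle, hc])
    intro w hw
    have h9 : f w + (-(c * Real.log D)) ≤ 0 := hmp w hw
    have hfw : f w = Gε ε w x + c * Real.log ‖w - x‖ := rfl
    rw [hfw] at h9
    linarith
  ------------------------------------------------------------------
  -- STEP B : 0 ≤ Gε ε w x on U1 \ {x}
  ------------------------------------------------------------------
  have hU1cl_compact : IsCompact (closure U1) := hU1b.isCompact_closure
  obtain ⟨B0, hB0⟩ := hU1cl_compact.exists_bound_of_continuousOn hfc
  set B : ℝ := max B0 0 with hBdef
  have hBnn : 0 ≤ B := le_max_right _ _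
  have hfB : ∀ w ∈ closure U1, |f w| ≤ B := by
    intro w hw
    exact le_trans (hB0 w hw) (le_max_left _ _)
  obtain ⟨s₁, hs₁pos, hs₁sub⟩ := Metric.mem_nhds_iff.mp (hU1o.mem_nhds hxU1)
  set s : ℝ := min (s₁/2) (Real.exp (-(B/c))) with hsdef
  have hspos : 0 < s := lt_min (by positivity) (Real.exp_pos _)
  have hslog : Real.log s ≤ -(B/c) := by
    have h1 : s ≤ Real.exp (-(B/c)) := min_le_right _ _
    calc Real.log s ≤ Real.log (Real.exp (-(B/c))) :=
      (Real.log_le_log_iff hspos (Real.exp_pos _)).mpr h1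
    _ = -(B/c) := Real.log_exp _
  have hssub : closedBall x s ⊆ U1 := by
    intro w hw
    apply hs₁sub
    have : dist w x ≤ s := mem_closedBall.mp hw
    have h2 : s ≤ s₁/2 := min_le_left _ _
    exact mem_ball.mpr (by linarith)
  -- near x
  have hnear : ∀ w ∈ U1, w ≠ x → dist w x ≤ s → 0 ≤ Gε ε w x := by
    intro w hw hne hd
    have hfw : f w = Gε ε w x + c * Real.log ‖w - x‖ := rfl
    have h1 : -B ≤ f w := by
      have := hfB w (subset_closure hw)
      exact neg_le_of_abs_le this
    have hpos : 0 < ‖w - x‖ := norm_pos_iff.mpr (sub_ne_zero_of_ne hne)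
    have h2 : Real.log ‖w - x‖ ≤ Real.log s := by
      apply (Real.log_le_log_iff hpos hspos).mpr
      rw [← dist_eq_norm]
      exact hd
    have h3 : c * Real.log ‖w - x‖ ≤ -B := by
      have h5 := mul_le_mul_of_nonneg_left h2 hc.le
      have h6 := mul_le_mul_of_nonneg_left hslog hc.le
      have h7 : c * (-(B/c)) = -B := by field_simp [mul_comm]
      linarith
    linarith
  -- far from x : maximum principle on U2
  have hfarcase : ∀ w ∈ U1, s < dist w x → 0 ≤ Gε ε w x := by
    set U2 : Set E2 := U1 \ closedBall x s with hU2def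
    have hU2o : IsOpen U2 := hU1o.sdiff isClosed_closedBall
    have hU2b : Bornology.IsBounded U2 := hU1b.subset diff_subset
    have hclU2a : closure U2 ⊆ closure U1 := closure_mono diff_subset
    have hclU2b : ∀ w ∈ closure U2, s ≤ dist w x := by
      intro w hw
      have h1 : closure U2 ⊆ closure ((closedBall x s)ᶜ) :=
        closure_mono (fun y hy => hy.2)
      have h2 := h1 hw
      rw [closure_compl, interior_closedBall x (ne_of_gt hspos)] at h2
      simpa [mem_ball, not_lt] using h2
    have hclU2ne : ∀ w ∈ closure U2, w ≠ x := by
      intro w hw heq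
      have := hclU2b w hw
      rw [heq] at this
      simp at this
      linarith
    set ψ : E2 → ℝ := fun w => (-1) * f w + c * Real.log ‖w - x‖ with hψdef
    have hmp := GNDB_maxPrinciple hU2o hU2b (u := ψ)
      ((continuousOn_const.mul (hfc.mono hclU2a)).add
        (continuousOn_const.mul (GNDB_continuousOn_log_norm x _ hclU2ne)))
      (fun w hw => by
        have hwU1 : w ∈ U1 := hw.1
        have hwne : w ≠ x := hclU2ne w (subset_closure hw)
        exact (contDiffAt_const.mul (hreg w hwU1).1).add
          (contDiffAt_const.mul (GNDB_contDiffAt_log_norm hwne)))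
      (fun w hw => by
        have hwU1 : w ∈ U1 := hw.1
        have hwne : w ≠ x := hclU2ne w (subset_closure hw)
        rw [hψdef, GNDB_lap_lincomb (hreg w hwU1).1 (GNDB_contDiffAt_log_norm hwne)]
        rw [(hreg w hwU1).2, GNDB_lap_log_norm hwne]
        ring)
      (fun w hw => by
        have hwcl : w ∈ closure U2 := frontier_subset_closure hw
        have hfront : w ∈ frontier U1 ∪ sphere x s := by
          have h1 : U2 = U1 ∩ (closedBall x s)ᶜ := by rw [hU2def, diff_eq]
          rw [h1] at hw
          have h2 := frontier_inter_subset U1 (closedBall x s)ᶜ hw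
          rcases h2 with h3 | h3
          · exact Or.inl h3.1
          · right
            have := h3.2
            rw [frontier_compl, frontier_closedBall x (ne_of_gt hspos)] at this
            exact this
        rcases hfront with h3 | h3
        · have h0 : Gε ε w x = 0 := hGb w h3
          have hfw : f w = Gε ε w x + c * Real.log ‖w - x‖ := rfl
          rw [hψdef]
          simp only []
          rw [hfw, h0]
          ring_nf
          exact le_of_eq (by ring)
        · have hds : dist w x = s := h3
          have h1 : -(f w) ≤ B := by
            have h7 := abs_le.mp (hfB w (hclU2a hwcl))
            linarith [h7.1]
          have h2 : Real.log ‖w - x‖ = Real.log s := by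
            rw [← dist_eq_norm, hds]
          rw [hψdef]
          simp only []
          rw [h2]
          have h5 : c * Real.log s ≤ -B := by
            have := mul_le_mul_of_nonneg_left hslog hc.le
            have h6 : c * (-(B/c)) = -B := by field_simp [mul_comm]
            linarith [this, h6.le]
          linarith)
    intro w hw hsd
    have hwU2 : w ∈ U2 := ⟨hw, by simpa [mem_closedBall, not_le] using hsd⟩
    have := hmp w (subset_closure hwU2)
    have hfw : f w = Gε ε w x + c * Real.log ‖w - x‖ := rfl
    rw [hψdef] at this
    simp only [] at this
    rw [hfw] at this
    linarith
  have hNN : ∀ w ∈ U1, w ≠ x → 0 ≤ Gε ε w x := by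
    intro w hw hne
    rcases le_or_gt (dist w x) s with h | h
    · exact hnear w hw hne h
    · exact hfarcase w hw h
  ------------------------------------------------------------------
  -- STEP C : comparison on the annulus
  ------------------------------------------------------------------
  set L : ℝ := Real.log ρ - Real.log ε with hLdef
  have hL1 : 1 ≤ L := by
    have h1 : Real.exp 1 * ε < ρ := by
      have h0' : ε < ρ * Real.exp (-1) := by rw [← hε₀def]; exact hεlt
      have h0 : Real.exp 1 * ε < Real.exp 1 * (ρ * Real.exp (-1)) :=
        mul_lt_mul_of_pos_left h0' (Real.exp_pos 1)
      have he : Real.exp 1 * (ρ * Real.exp (-1)) = ρ := by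
        rw [mul_comm (Real.exp 1), mul_assoc, ← Real.exp_add]
        norm_num
      rw [he] at h0
      exact h0
    have h2 : Real.log (Real.exp 1 * ε) ≤ Real.log ρ :=
      (Real.log_le_log_iff (by positivity) hρ).mpr h1.le
    rw [Real.log_mul (Real.exp_ne_zero 1) (ne_of_gt hεpos), Real.log_exp] at h2
    linarith
  have hLpos : 0 < L := lt_of_lt_of_le one_pos hL1
  set A : Set E2 := ball x₀ ρ \ closedBall x₀ ε with hAdef
  have hAo : IsOpen A := isOpen_ball.sdiff isClosed_closedBall
  have hAb : Bornology.IsBounded A := (isBounded_ball).subset diff_subset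
  have hAU1 : A ⊆ U1 := by
    intro w hw
    constructor
    · apply hball
      exact mem_closedBall.mpr (le_trans (mem_ball.mp hw.1).le hρε₁)
    · exact hw.2
  have hclA : closure A ⊆ closure U1 := closure_mono hAU1
  have hclAρ : ∀ w ∈ closure A, dist w x₀ ≤ ρ := by
    intro w hw
    have h1 : closure A ⊆ closure (ball x₀ ρ) := closure_mono diff_subset
    have := h1 hw
    have h2 : closure (ball x₀ ρ) ⊆ closedBall x₀ ρ := closure_ball_subset_closedBall
    exact mem_closedBall.mp (h2 this)
  have hclAε : ∀ w ∈ closure A, ε ≤ dist w x₀ := by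
    intro w hw
    have h1 : closure A ⊆ closure ((closedBall x₀ ε)ᶜ) := closure_mono (fun y hy => hy.2)
    have h2 := h1 hw
    rw [closure_compl, interior_closedBall x₀ (ne_of_gt hεpos)] at h2
    simpa [mem_ball, not_lt] using h2
  have hclAnex : ∀ w ∈ closure A, w ≠ x := fun w hw => hfarne w (hclAρ w hw)
  have hclAnex₀ : ∀ w ∈ closure A, w ≠ x₀ := by
    intro w hw heq
    have := hclAε w hw
    rw [heq] at this
    simp at this
    linarith
  set K : ℝ := (M/L) * Real.log ε with hKdef
  set χ : E2 → ℝ := fun w =>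
    (1 * f w + 1 * ((-c) * Real.log ‖w - x‖ + (-(M/L)) * Real.log ‖w - x₀‖)) + K with hχdef
  have hχval : ∀ w : E2, χ w
      = Gε ε w x - (M/L) * (Real.log ‖w - x₀‖ - Real.log ε) := by
    intro w
    have hfw : f w = Gε ε w x + c * Real.log ‖w - x‖ := rfl
    rw [hχdef]
    simp only []
    rw [hfw, hKdef]
    ring
  have stepC : ∀ w ∈ closure A,
      Gε ε w x ≤ (M/L) * (Real.log ‖w - x₀‖ - Real.log ε) := by
    have hmp := GNDB_maxPrinciple hAo hAb (u := χ)
      (by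
        apply ContinuousOn.add _ continuousOn_const
        apply ContinuousOn.add
        · exact continuousOn_const.mul (hfc.mono hclA)
        · exact continuousOn_const.mul
            ((continuousOn_const.mul (GNDB_continuousOn_log_norm x _ hclAnex)).add
              (continuousOn_const.mul (GNDB_continuousOn_log_norm x₀ _ hclAnex₀))))
      (fun w hw => by
        have hwU1 : w ∈ U1 := hAU1 hw
        have hwx : w ≠ x := hclAnex w (subset_closure hw)
        have hwx₀ : w ≠ x₀ := hclAnex₀ w (subset_closure hw)
        rw [hχdef]
        exact ((contDiffAt_const.mul (hreg w hwU1).1).add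
          (contDiffAt_const.mul ((contDiffAt_const.mul (GNDB_contDiffAt_log_norm hwx)).add
            (contDiffAt_const.mul (GNDB_contDiffAt_log_norm hwx₀))))).add contDiffAt_const)
      (fun w hw => by
        have hwU1 : w ∈ U1 := hAU1 hw
        have hwx : w ≠ x := hclAnex w (subset_closure hw)
        have hwx₀ : w ≠ x₀ := hclAnex₀ w (subset_closure hw)
        rw [hχdef]
        rw [GNDB_lap_add_const]
        have hinner := GNDB_lap_lincomb (GNDB_contDiffAt_log_norm hwx)
          (GNDB_contDiffAt_log_norm hwx₀) (-c) (-(M/L))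
        have hinner2 : ContDiffAt ℝ 2 (fun y : E2 =>
            (-c) * Real.log ‖y - x‖ + (-(M/L)) * Real.log ‖y - x₀‖) w :=
          (contDiffAt_const.mul (GNDB_contDiffAt_log_norm hwx)).add
            (contDiffAt_const.mul (GNDB_contDiffAt_log_norm hwx₀))
        rw [GNDB_lap_lincomb (hreg w hwU1).1 hinner2]
        rw [(hreg w hwU1).2, hinner, GNDB_lap_log_norm hwx, GNDB_lap_log_norm hwx₀]
        ring)
      (fun w hw => by
        have hwcl : w ∈ closure A := frontier_subset_closure hw
        have hfront : w ∈ sphere x₀ ρ ∪ sphere x₀ ε := by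
          have h1 : A = ball x₀ ρ ∩ (closedBall x₀ ε)ᶜ := by rw [hAdef, diff_eq]
          rw [h1] at hw
          have h2 := frontier_inter_subset (ball x₀ ρ) (closedBall x₀ ε)ᶜ hw
          rcases h2 with h3 | h3
          · left
            have := h3.1
            rw [frontier_ball x₀ (ne_of_gt hρ)] at this
            exact this
          · right
            have := h3.2
            rw [frontier_compl, frontier_closedBall x₀ (ne_of_gt hεpos)] at this
            exact this
        rw [hχval w]
        rcases hfront with h3 | h3
        · -- outer sphere : use step A
          have hdρ : dist w x₀ = ρ := h3
          have hwU1 : w ∈ U1 := by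
            constructor
            · exact hball (mem_closedBall.mpr (by rw [hdρ]; exact hρε₁))
            · simp [mem_closedBall, hdρ]
              linarith
          have hA := stepA w (subset_closure hwU1)
          have hwx : r/2 ≤ ‖w - x‖ := hfar w (le_of_eq hdρ)
          have hlog1 : Real.log (r/2) ≤ Real.log ‖w - x‖ :=
            (Real.log_le_log_iff (by positivity) (by linarith)).mpr hwx
          have hGle : Gε ε w x ≤ M := by
            rw [hMdef]
            nlinarith
          have hwn : ‖w - x₀‖ = ρ := by rw [← dist_eq_norm]; exact hdρ
          rw [hwn]
          have hML : (M/L) * (Real.log ρ - Real.log ε) = M := by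
            rw [← hLdef]; field_simp
          rw [hML]
          linarith
        · -- inner sphere : Gε = 0 there
          have hdε : dist w x₀ = ε := h3
          have h0 : Gε ε w x = 0 := hGb w (hsf h3)
          have hwn : ‖w - x₀‖ = ε := by rw [← dist_eq_norm]; exact hdε
          rw [h0, hwn]
          simp)
    intro w hw
    have := hmp w hw
    rw [hχval w] at this
    linarith
  ------------------------------------------------------------------
  -- FINAL : derivative estimate at z
  ------------------------------------------------------------------
  set u0 : E2 → ℝ := fun w => Gε ε x w with hu0def
  have hu0eq : ∀ w, u0 w = Gε ε w x := fun w => hGsymm ε hεIoo x w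
  have hdiff : DifferentiableAt ℝ u0 z := hGdiff ε hεIoo x hx z hz
  set v : E2 := ε⁻¹ • (z - x₀) with hvdef
  set L0 := fderiv ℝ u0 z with hL0def
  have hu0z : u0 z = 0 := by
    rw [hu0eq z]
    exact hGb z (hsf hz)
  -- the curve
  set ψ : ℝ → ℝ := fun t => u0 (z + t • v) with hψdef
  have hψ0 : ψ 0 = 0 := by simp [hψdef, hu0z]
  have hψd : HasDerivAt ψ (L0 v) 0 := by
    have hline : HasDerivAt (fun t : ℝ => z + t • v) v 0 := by
      have := ((hasDerivAt_id (0:ℝ)).smul_const v).const_add z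
      simpa using this
    have h1 : HasFDerivAt u0 L0 (z + (0:ℝ) • v) := by
      have : z + (0:ℝ) • v = z := by simp
      rw [this]
      exact hdiff.hasFDerivAt
    exact h1.comp_hasDerivAt 0 hline
  -- bounds along the curve
  have hwt : ∀ t : ℝ, 0 < t → t < ρ - ε → 0 ≤ ψ t ∧ ψ t ≤ (M/(L*ε)) * t := by
    intro t ht htρ
    set wt : E2 := z + t • v with hwtdef
    have hwtnorm : ‖wt - x₀‖ = ε + t := by
      have h1 : wt - x₀ = (1 + t/ε) • (z - x₀) := by
        rw [hwtdef, hvdef]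
        rw [smul_smul]
        have : (1 + t/ε) • (z - x₀) = (z - x₀) + (t/ε) • (z - x₀) := by
          rw [add_smul, one_smul]
        rw [this]
        rw [div_eq_mul_inv]
        abel_nf
      rw [h1, norm_smul, hzn, Real.norm_eq_abs, abs_of_pos (by positivity)]
      field_simp
    have hwtd : dist wt x₀ = ε + t := by rw [dist_eq_norm]; exact hwtnorm
    have hwtA : wt ∈ A := by
      constructor
      · exact mem_ball.mpr (by rw [hwtd]; linarith)
      · simp only [mem_closedBall, not_le]
        rw [hwtd]; linarith
    have hwtU1 : wt ∈ U1 := hAU1 hwtA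
    have hwtnex : wt ≠ x := hclAnex wt (subset_closure hwtA)
    have h1 : 0 ≤ Gε ε wt x := hNN wt hwtU1 hwtnex
    have h2 := stepC wt (subset_closure hwtA)
    have h3 : Real.log ‖wt - x₀‖ - Real.log ε ≤ t/ε := by
      rw [hwtnorm]
      have h4 : Real.log (ε + t) - Real.log ε = Real.log ((ε+t)/ε) := by
        rw [Real.log_div (by positivity) (ne_of_gt hεpos)]
      rw [h4]
      have h5 : Real.log ((ε+t)/ε) ≤ (ε+t)/ε - 1 :=
        Real.log_le_sub_one_of_pos (by positivity)
      have h6 : (ε+t)/ε - 1 = t/ε := by rw [add_div, div_self (ne_of_gt hεpos)]; ring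
      linarith
    constructor
    · rw [hψdef]; simp only []
      rw [hu0eq]
      exact h1
    · rw [hψdef]; simp only []
      rw [hu0eq]
      calc Gε ε wt x ≤ (M/L) * (Real.log ‖wt - x₀‖ - Real.log ε) := h2
      _ ≤ (M/L) * (t/ε) := by
          apply mul_le_mul_of_nonneg_left h3 (by positivity)
      _ = (M/(L*ε)) * t := by field_simp
  -- take limits of slopes
  have hIooMem : Ioo (0:ℝ) (ρ - ε) ∈ 𝓝[>] (0:ℝ) :=
    Ioo_mem_nhdsGT_of_mem ⟨le_rfl, by linarith⟩
  have hslopet : Tendsto (slope ψ 0) (𝓝[>] 0) (𝓝 (L0 v)) :=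
    (hasDerivAt_iff_tendsto_slope.mp hψd).mono_left
      (nhdsWithin_mono 0 (fun t ht => ne_of_gt ht))
  have hslope_bounds : ∀ᶠ t in 𝓝[>] (0:ℝ),
      0 ≤ slope ψ 0 t ∧ slope ψ 0 t ≤ M/(L*ε) := by
    filter_upwards [hIooMem, self_mem_nhdsWithin] with t htIoo htpos
    have ht : 0 < t := htpos
    obtain ⟨hb1, hb2⟩ := hwt t htIoo.1 htIoo.2
    rw [slope_def_field, hψ0, sub_zero, sub_zero]
    constructor
    · positivity
    · rw [div_le_iff₀ ht]
      calc ψ t ≤ (M/(L*ε)) * t := hb2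
      _ = M/(L*ε) * t := rfl
  have hge : 0 ≤ L0 v :=
    ge_of_tendsto hslopet (hslope_bounds.mono fun t ht => ht.1)
  have hle : L0 v ≤ M/(L*ε) :=
    le_of_tendsto hslopet (hslope_bounds.mono fun t ht => ht.2)
  -- conclude
  have hML : M/(L*ε) ≤ M/ε := by
    apply div_le_div_of_nonneg_left hM.le (by positivity)
    nlinarith
  have hgoal : |L0 (-(‖z - x₀‖⁻¹ • (z - x₀)))| ≤ M / ε := by
    have hveq : ‖z - x₀‖⁻¹ • (z - x₀) = v := by rw [hzn, hvdef]
    rw [hveq, map_neg, abs_neg, abs_of_nonneg hge]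
    linarith
  exact hgoal
end
end
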